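/- Let d, n ≥ 1, σ > 0, and let A : I → ℝ^{d×d} be continuous on an open interval I ⊆ ℝ with A(t) skew-symmetric for every t. Suppose q_i, p_i : I → ℝ^d (i = 1,…,n) are differentiable and satisfy the rotation-coupled landmark Hamiltonian equations q_i'(t) = A(t) q_i(t) + ∑_{j=1}^n exp(−‖q_i(t) − q_j(t)‖²/(2σ²)) p_j(t) and p_i'(t) = A(t) p_i(t) + (1/σ²) ∑_{j=1}^n exp(−‖q_i(t) − q_j(t)‖²/(2σ²)) ⟨p_i(t), p_j(t)⟩ (q_i(t) − q_j(t)). If the total linear momentum ∑_{i=1}^n p_i vanishes at some t₀ ∈ I, then ∑_{i=1}^n p_i(t) = 0 for all t ∈ I. -/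

import Mathlib

open Matrix

private lemma lipschitz_mulVec {d : ℕ} (M : Matrix (Fin d) (Fin d) ℝ) :
    LipschitzWith ⟨∑ i, ∑ j, |M i j|, by positivity⟩ M.mulVec := by
  apply LipschitzWith.of_dist_le_mul
  intro x y
  rw [dist_eq_norm, dist_eq_norm, ← Matrix.mulVec_sub]
  set z := x - y with hz
  have hC : (0:ℝ) ≤ ∑ i, ∑ j, |M i j| := by positivity
  rw [pi_norm_le_iff_of_nonneg (by positivity)]
  intro i
  have h1 : ‖M.mulVec z i‖ = |∑ j, M i j * z j| := by
    simp [Matrix.mulVec, dotProduct, Real.norm_eq_abs]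
  rw [h1]
  calc |∑ j, M i j * z j| ≤ ∑ j, |M i j * z j| := Finset.abs_sum_le_sum_abs _ _
    _ ≤ ∑ j, |M i j| * ‖z‖ := by
        apply Finset.sum_le_sum
        intro j _
        rw [abs_mul]
        exact mul_le_mul_of_nonneg_left (norm_le_pi_norm z j) (abs_nonneg _)
    _ = (∑ j, |M i j|) * ‖z‖ := by rw [← Finset.sum_mul]
    _ ≤ (∑ i, ∑ j, |M i j|) * ‖z‖ := by
        apply mul_le_mul_of_nonneg_right _ (norm_nonneg _)
        exact Finset.single_le_sum (f := fun k => ∑ j, |M k j|)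
          (fun k _ => by positivity) (Finset.mem_univ i)

/-- The zero level set of the translation momentum map `μ_τ(q,p) = ∑ᵢ pᵢ` is preserved by the
rotation-coupled landmark Hamiltonian flow: if `∑ᵢ pᵢ` vanishes at some `t₀`, it vanishes
for all times. -/
theorem translation_momentum_zero_preserved {d n : ℕ} (hd : 1 ≤ d) (hn : 1 ≤ n)
    (σ : ℝ) (hσ : 0 < σ) (a b : ℝ)
    (A : ℝ → Matrix (Fin d) (Fin d) ℝ)
    (hAcont : ContinuousOn A (Set.Ioo a b))
    (hAskew : ∀ t ∈ Set.Ioo a b, (A t).transpose = -(A t))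
    (q p : Fin n → ℝ → (Fin d → ℝ))
    (hq : ∀ t ∈ Set.Ioo a b, ∀ i, HasDerivAt (q i)
      ((A t).mulVec (q i t) +
        ∑ j, Real.exp (-((q i t - q j t) ⬝ᵥ (q i t - q j t)) / (2 * σ ^ 2)) • p j t) t)
    (hp : ∀ t ∈ Set.Ioo a b, ∀ i, HasDerivAt (p i)
      ((A t).mulVec (p i t) + (1 / σ ^ 2) • ∑ j,
        (Real.exp (-((q i t - q j t) ⬝ᵥ (q i t - q j t)) / (2 * σ ^ 2))
          * (p i t ⬝ᵥ p j t)) • (q i t - q j t)) t)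
    (t₀ : ℝ) (ht₀ : t₀ ∈ Set.Ioo a b) (h0 : ∑ i, p i t₀ = 0) :
    ∀ t ∈ Set.Ioo a b, ∑ i, p i t = 0 := by
  set S : ℝ → (Fin d → ℝ) := fun t => ∑ i, p i t with hSdef
  -- the total momentum satisfies the linear ODE S' = A S
  have hS : ∀ t ∈ Set.Ioo a b, HasDerivAt S ((A t).mulVec (S t)) t := by
    intro t ht
    have h1 : HasDerivAt S (∑ i, ((A t).mulVec (p i t) + (1 / σ ^ 2) • ∑ j,
        (Real.exp (-((q i t - q j t) ⬝ᵥ (q i t - q j t)) / (2 * σ ^ 2))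
          * (p i t ⬝ᵥ p j t)) • (q i t - q j t))) t :=
      HasDerivAt.fun_sum (fun i _ => hp t ht i)
    set f : Fin n → Fin n → (Fin d → ℝ) := fun i j =>
      (Real.exp (-((q i t - q j t) ⬝ᵥ (q i t - q j t)) / (2 * σ ^ 2))
          * (p i t ⬝ᵥ p j t)) • (q i t - q j t) with hfdef
    have key : ∀ i j, f i j = - f j i := by
      intro i j
      have e1 : (q i t - q j t) ⬝ᵥ (q i t - q j t) = (q j t - q i t) ⬝ᵥ (q j t - q i t) := by
        rw [show q i t - q j t = -(q j t - q i t) by rw [neg_sub]]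
        rw [neg_dotProduct, dotProduct_neg, neg_neg]
      have e2 : p i t ⬝ᵥ p j t = p j t ⬝ᵥ p i t := dotProduct_comm _ _
      simp only [hfdef, e1, e2]
      rw [show q i t - q j t = -(q j t - q i t) by rw [neg_sub], smul_neg]
    have hD : ∑ i, ∑ j, f i j = 0 := by
      set D : Fin d → ℝ := ∑ i, ∑ j, f i j with hDdef
      have hDneg : D = -D := by
        calc D = ∑ i, ∑ j, f i j := hDdef
          _ = ∑ j, ∑ i, f i j := Finset.sum_comm
          _ = ∑ j, ∑ i, -(f j i) := by
              apply Finset.sum_congr rfl; intro j _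
              apply Finset.sum_congr rfl; intro i _
              rw [← key]
          _ = -D := by simp [hDdef, Finset.sum_comm (f := fun i j => f i j)]
      have h2 : (2:ℝ) • D = 0 := by
        rw [two_smul]
        nth_rewrite 2 [hDneg]
        exact add_neg_cancel D
      have := smul_eq_zero.mp h2
      rcases this with h | h
      · norm_num at h
      · exact hDdef ▸ h
    have h2 : ∑ i, ((A t).mulVec (p i t) + (1 / σ ^ 2) • ∑ j, f i j)
        = (A t).mulVec (S t) := by
      rw [Finset.sum_add_distrib]
      have hlin : ∑ i, (A t).mulVec (p i t) = (A t).mulVec (S t) := by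
        simp only [hSdef, ← Matrix.mulVecLin_apply, ← map_sum]
      have hzero : ∑ i, (1 / σ ^ 2 : ℝ) • ∑ j, f i j = 0 := by
        rw [← Finset.smul_sum, hD, smul_zero]
      rw [hlin, hzero, add_zero]
    rw [← h2]
    exact h1
  -- uniqueness of the linear ODE
  intro t₁ ht₁
  set m := min t₀ t₁ with hm
  set M := max t₀ t₁ with hM
  have ham : a < m := lt_min ht₀.1 ht₁.1
  have hMb : M < b := max_lt ht₀.2 ht₁.2
  set c := (a + m) / 2 with hc
  set e := (M + b) / 2 with he
  have hac : a < c := by simp only [hc]; linarith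
  have hcm : c < m := by simp only [hc]; linarith
  have hMe : M < e := by simp only [he]; linarith
  have heb : e < b := by simp only [he]; linarith
  have hce : c < e := lt_trans (lt_of_lt_of_le hcm (min_le_left _ _))
    (lt_of_le_of_lt (le_max_left _ _) hMe)
  have hsub : Set.Icc c e ⊆ Set.Ioo a b := fun x hx =>
    ⟨lt_of_lt_of_le hac hx.1, lt_of_le_of_lt hx.2 heb⟩
  -- clamp to [c, e]
  set proj : ℝ → ℝ := fun t => max c (min t e) with hproj
  have hprojmem : ∀ t, proj t ∈ Set.Icc c e := by
    intro t
    constructor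
    · exact le_max_left _ _
    · exact max_le hce.le (min_le_right _ _)
  have hprojid : ∀ t ∈ Set.Icc c e, proj t = t := by
    intro t ht
    simp only [hproj]
    rw [min_eq_left ht.2, max_eq_right ht.1]
  -- Lipschitz bound on the compact interval
  set C : ℝ → ℝ := fun s => ∑ i, ∑ j, |A s i j| with hCdef
  have hCcont : ContinuousOn C (Set.Icc c e) := by
    apply continuousOn_finset_sum
    intro i _
    apply continuousOn_finset_sum
    intro j _
    have : ContinuousOn (fun s => A s i j) (Set.Icc c e) := by
      exact ((continuous_apply j).comp (continuous_apply i)).comp_continuousOn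
        (hAcont.mono hsub)
    exact continuous_abs.comp_continuousOn this
  obtain ⟨tm, htm, htmax⟩ := isCompact_Icc.exists_isMaxOn (Set.nonempty_Icc.mpr hce.le) hCcont
  set K : NNReal := ⟨C tm, by positivity⟩ with hK
  set v : ℝ → (Fin d → ℝ) → (Fin d → ℝ) := fun t x => (A (proj t)).mulVec x with hv
  have hlip : ∀ t, LipschitzOnWith K (v t) Set.univ := by
    intro t
    apply LipschitzWith.lipschitzOnWith
    apply (lipschitz_mulVec (A (proj t))).weaken
    apply NNReal.coe_le_coe.mp
    exact htmax (hprojmem t)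
  have ht₀' : t₀ ∈ Set.Ioo c e := ⟨lt_of_lt_of_le hcm (min_le_left _ _),
    lt_of_le_of_lt (le_max_left _ _) hMe⟩
  have ht₁' : t₁ ∈ Set.Ioo c e := ⟨lt_of_lt_of_le hcm (min_le_right _ _),
    lt_of_le_of_lt (le_max_right _ _) hMe⟩
  have hsub' : Set.Ioo c e ⊆ Set.Ioo a b := fun x hx => hsub (Set.Ioo_subset_Icc_self hx)
  have hf : ∀ t ∈ Set.Ioo c e, HasDerivAt S (v t (S t)) t ∧ S t ∈ Set.univ := by
    intro t ht
    refine ⟨?_, Set.mem_univ _⟩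
    have : v t (S t) = (A t).mulVec (S t) := by
      simp only [hv, hprojid t (Set.Ioo_subset_Icc_self ht)]
    rw [this]
    exact hS t (hsub' ht)
  have hg : ∀ t ∈ Set.Ioo c e,
      HasDerivAt (fun _ : ℝ => (0 : Fin d → ℝ)) (v t 0) t ∧ (0 : Fin d → ℝ) ∈ Set.univ := by
    intro t ht
    refine ⟨?_, Set.mem_univ _⟩
    have : v t (0 : Fin d → ℝ) = 0 := by simp [hv, Matrix.mulVec_zero]
    rw [this]
    exact hasDerivAt_const t 0
  have heq0 : S t₀ = (fun _ : ℝ => (0 : Fin d → ℝ)) t₀ := h0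
  have := ODE_solution_unique_of_mem_Ioo (fun t _ => hlip t) ht₀' hf hg heq0 ht₁'
  exact this
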